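/- In the three-type game specified in the context, the strategy profile π* with π₁*(s'|θ) = 1 for every θ ∈ Θ and π₂*(a⁴|s') = π₂*(a⁴|s'') = 1 is a rationality-compatible equilibrium (RCE); moreover, the only pair of distinct types related by rational compatibility at s'' is θ'' ≿_{s''} θ'. -/

import Mathlib

open scoped Classical
open Finset Filter

noncomputable section

/-- `p` is a probability distribution on the finite type `X`. -/
def IsDist {X : Type*} [Fintype X] (p : X → ℝ) : Prop :=
  (∀ x, 0 ≤ p x) ∧ ∑ x, p x = 1

variable {Θ S A : Type*} [Fintype Θ] [Fintype S] [Fintype A]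

/-- Sender's expected payoff `u₁(θ, s, π₂(·|s))` from signal `s` when the receiver plays `π₂`. -/
def u1R (u₁ : Θ → S → A → ℝ) (π₂ : S → A → ℝ) (θ : Θ) (s : S) : ℝ :=
  ∑ a, π₂ s a * u₁ θ s a

/-- Receiver's expected payoff of action `a` after signal `s` under belief `p`. -/
def expU2 (u₂ : Θ → S → A → ℝ) (p : Θ → ℝ) (s : S) (a : A) : ℝ :=
  ∑ θ, p θ * u₂ θ s a

/-- `BR(p, s)`: pure best responses to belief `p` after signal `s`. -/
def BRb (u₂ : Θ → S → A → ℝ) (p : Θ → ℝ) (s : S) : Set A :=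
  {a | ∀ a', expU2 u₂ p s a' ≤ expU2 u₂ p s a}

/-- `A_s^BR`: actions that best respond to some belief after `s`. -/
def ABR (u₂ : Θ → S → A → ℝ) (s : S) : Set A :=
  {a | ∃ p, IsDist p ∧ a ∈ BRb u₂ p s}

/-- Membership in `Π₂•`: a receiver behavior strategy supported on `A_s^BR` after every `s`. -/
def Rational2 (u₂ : Θ → S → A → ℝ) (π₂ : S → A → ℝ) : Prop :=
  (∀ s, IsDist (π₂ s)) ∧ ∀ s a, π₂ s a ≠ 0 → a ∈ ABR u₂ s

/-- `u₁(θ,s,π₂(·|s)) ≥ max_{s' ≠ s} u₁(θ,s',π₂(·|s'))`. -/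
def WeakBest (u₁ : Θ → S → A → ℝ) (π₂ : S → A → ℝ) (θ : Θ) (s : S) : Prop :=
  ∀ s', s' ≠ s → u1R u₁ π₂ θ s' ≤ u1R u₁ π₂ θ s

/-- `u₁(θ,s,π₂(·|s)) > max_{s' ≠ s} u₁(θ,s',π₂(·|s'))`. -/
def StrictBest (u₁ : Θ → S → A → ℝ) (π₂ : S → A → ℝ) (θ : Θ) (s : S) : Prop :=
  ∀ s', s' ≠ s → u1R u₁ π₂ θ s' < u1R u₁ π₂ θ s

/-- `θ' ≿_s θ''`: `s` is more rationally-compatible with `θ'` than with `θ''`. -/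
def MoreCompat (u₁ u₂ : Θ → S → A → ℝ) (s : S) (θ' θ'' : Θ) : Prop :=
  ∀ π₂, Rational2 u₂ π₂ → WeakBest u₁ π₂ θ'' s → StrictBest u₁ π₂ θ' s

/-- `s` maximizes `s' ↦ u₁(θ, s', π₂(·|s'))`. -/
def GlobalBest (u₁ : Θ → S → A → ℝ) (π₂ : S → A → ℝ) (θ : Θ) (s : S) : Prop :=
  ∀ s', u1R u₁ π₂ θ s' ≤ u1R u₁ π₂ θ s

/-- `S_θ`: signals that best respond to some (not necessarily rational) receiver strategy. -/
def Sθ (u₁ : Θ → S → A → ℝ) (θ : Θ) : Set S :=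
  {s | ∃ π₂ : S → A → ℝ, (∀ s', IsDist (π₂ s')) ∧ GlobalBest u₁ π₂ θ s}

/-- `Θ_s`: types for which `s` is not dominated. -/
def Θtypes (u₁ : Θ → S → A → ℝ) (s : S) : Set Θ := {θ | s ∈ Sθ u₁ θ}

/-- Membership in `Π₁•`. -/
def Rational1 (u₁ : Θ → S → A → ℝ) (π₁ : Θ → S → ℝ) : Prop :=
  (∀ θ, IsDist (π₁ θ)) ∧ ∀ θ s, π₁ θ s ≠ 0 → s ∈ Sθ u₁ θ

/-- Nash equilibrium of the signaling game. -/
def NashEq (lam : Θ → ℝ) (u₁ u₂ : Θ → S → A → ℝ)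
    (π₁ : Θ → S → ℝ) (π₂ : S → A → ℝ) : Prop :=
  (∀ θ, IsDist (π₁ θ)) ∧ (∀ s, IsDist (π₂ s)) ∧
  (∀ θ s, π₁ θ s ≠ 0 → GlobalBest u₁ π₂ θ s) ∧
  (∀ s, (∃ θ, π₁ θ s ≠ 0) → ∀ a, π₂ s a ≠ 0 →
    ∀ a', ∑ θ, lam θ * π₁ θ s * u₂ θ s a' ≤ ∑ θ, lam θ * π₁ θ s * u₂ θ s a)

/-- Equilibrium expected payoff `E_π[u₁ | θ]`. -/
def eqPayoff (u₁ : Θ → S → A → ℝ) (π₁ : Θ → S → ℝ) (π₂ : S → A → ℝ) (θ : Θ) : ℝ :=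
  ∑ s, π₁ θ s * u1R u₁ π₂ θ s

/-- `s` is off the path of play of `π₁`. -/
def OffPath (π₁ : Θ → S → ℝ) (s : S) : Prop := ∀ θ, π₁ θ s = 0

/-- `J̃(s, π)`: types for which some best response to `s` weakly improves on the equilibrium. -/
def Jt (u₁ u₂ : Θ → S → A → ℝ) (π₁ : Θ → S → ℝ) (π₂ : S → A → ℝ) (s : S) : Set Θ :=
  {θ | ∃ a ∈ ABR u₂ s, eqPayoff u₁ π₁ π₂ θ ≤ u₁ θ s a}

/-- The odds-ratio condition defining `P_{θ'▷θ''}`. -/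
def OddsLe (lam : Θ → ℝ) (θ' θ'' : Θ) (p : Θ → ℝ) : Prop :=
  p θ'' * lam θ' ≤ lam θ'' * p θ'

/-- `Δ(T)`: beliefs supported on `T`. -/
def DeltaOn {Θ : Type*} [Fintype Θ] (T : Set Θ) : Set (Θ → ℝ) :=
  {p | IsDist p ∧ ∀ θ ∉ T, p θ = 0}

/-- `P̃(s, π)`: rationality-compatible beliefs at profile `π`. -/
def Pt (lam : Θ → ℝ) (u₁ u₂ : Θ → S → A → ℝ) (π₁ : Θ → S → ℝ) (π₂ : S → A → ℝ)
    (s : S) : Set (Θ → ℝ) :=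
  if (Jt u₁ u₂ π₁ π₂ s).Nonempty then
    DeltaOn (Jt u₁ u₂ π₁ π₂ s) ∩
      {p | ∀ θ' θ'', MoreCompat u₁ u₂ s θ' θ'' → OddsLe lam θ' θ'' p}
  else DeltaOn (Θtypes u₁ s)

/-- Rationality-compatible equilibrium. -/
def RCE (lam : Θ → ℝ) (u₁ u₂ : Θ → S → A → ℝ)
    (π₁ : Θ → S → ℝ) (π₂ : S → A → ℝ) : Prop :=
  NashEq lam u₁ u₂ π₁ π₂ ∧
  ∀ s a, π₂ s a ≠ 0 → ∃ p ∈ Pt lam u₁ u₂ π₁ π₂ s, a ∈ BRb u₂ p s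

/-- `P̂(s)`: uniformly rationality-compatible beliefs. -/
def Ph (lam : Θ → ℝ) (u₁ u₂ : Θ → S → A → ℝ) (s : S) : Set (Θ → ℝ) :=
  DeltaOn (Θtypes u₁ s) ∩
    {p | ∀ θ' θ'', MoreCompat u₁ u₂ s θ' θ'' → OddsLe lam θ' θ'' p}

/-- Uniform rationality-compatible equilibrium. -/
def URCE (lam : Θ → ℝ) (u₁ u₂ : Θ → S → A → ℝ)
    (π₁ : Θ → S → ℝ) (π₂ : S → A → ℝ) : Prop :=
  NashEq lam u₁ u₂ π₁ π₂ ∧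
  ∀ θ s, OffPath π₁ s → ∀ a, (∃ p ∈ Ph lam u₁ u₂ s, a ∈ BRb u₂ p s) →
    u₁ θ s a ≤ eqPayoff u₁ π₁ π₂ θ

/-- Receiver's expected payoff of a mixed action `α` after `s` under belief `p`. -/
def expU2m (u₂ : Θ → S → A → ℝ) (p : Θ → ℝ) (s : S) (α : A → ℝ) : ℝ :=
  ∑ θ, p θ * ∑ a, α a * u₂ θ s a

/-- `MBR(p, s)`: mixed best responses to belief `p` after `s`. -/
def MBRb (u₂ : Θ → S → A → ℝ) (p : Θ → ℝ) (s : S) : Set (A → ℝ) :=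
  {α | IsDist α ∧ ∀ α', IsDist α' → expU2m u₂ p s α' ≤ expU2m u₂ p s α}

/-- `MBR(s)`. -/
def MBR (u₂ : Θ → S → A → ℝ) (s : S) : Set (A → ℝ) :=
  {α | ∃ p, IsDist p ∧ α ∈ MBRb u₂ p s}

/-- `u₁(θ, s, α)` for a mixed action `α`. -/
def u1m (u₁ : Θ → S → A → ℝ) (θ : Θ) (s : S) (α : A → ℝ) : ℝ :=
  ∑ a, α a * u₁ θ s a

/-- `D(θ, s; π)`. -/
def Dset (u₁ u₂ : Θ → S → A → ℝ) (π₁ : Θ → S → ℝ) (π₂ : S → A → ℝ)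
    (θ : Θ) (s : S) : Set (A → ℝ) :=
  {α | α ∈ MBR u₂ s ∧ eqPayoff u₁ π₁ π₂ θ < u1m u₁ θ s α}

/-- `D°(θ, s; π)`. -/
def D0set (u₁ u₂ : Θ → S → A → ℝ) (π₁ : Θ → S → ℝ) (π₂ : S → A → ℝ)
    (θ : Θ) (s : S) : Set (A → ℝ) :=
  {α | α ∈ MBR u₂ s ∧ eqPayoff u₁ π₁ π₂ θ = u1m u₁ θ s α}

/-! ### The three-type game (RCE that is not divine; iterated divinity) -/

/-- Sender types: `t1 = θ'`, `t2 = θ''`, `t3 = θ'''`. -/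
inductive Ty | t1 | t2 | t3
deriving DecidableEq

instance : Fintype Ty :=
  ⟨{Ty.t1, Ty.t2, Ty.t3}, fun x => by cases x <;> simp⟩

/-- Signals: `s1 = s'`, `s2 = s''`. -/
inductive Sg | s1 | s2
deriving DecidableEq

instance : Fintype Sg :=
  ⟨{Sg.s1, Sg.s2}, fun x => by cases x <;> simp⟩

/-- Receiver actions. -/
inductive Ac | a1 | a2 | a3 | a4
deriving DecidableEq

instance : Fintype Ac :=
  ⟨{Ac.a1, Ac.a2, Ac.a3, Ac.a4}, fun x => by cases x <;> simp⟩

/-- Prior: all three types equally likely. -/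
def lamG : Ty → ℝ := fun _ => 1 / 3

/-- Sender payoffs: everything after `s'` is 0; after `s''` as in the example. -/
def u1G : Ty → Sg → Ac → ℝ
  | _, .s1, _ => 0
  | .t1, .s2, .a1 => 1
  | .t1, .s2, .a2 => -1
  | .t1, .s2, .a3 => -2
  | .t1, .s2, .a4 => -7
  | .t2, .s2, .a1 => 5
  | .t2, .s2, .a2 => 3
  | .t2, .s2, .a3 => -1
  | .t2, .s2, .a4 => -5
  | .t3, .s2, .a1 => -3
  | .t3, .s2, .a2 => 5
  | .t3, .s2, .a3 => 1
  | .t3, .s2, .a4 => -3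

/-- Receiver payoffs: everything after `s'` is 0; after `s''` as in the example. -/
def u2G : Ty → Sg → Ac → ℝ
  | _, .s1, _ => 0
  | .t1, .s2, .a1 => 0.9
  | .t1, .s2, .a2 => 0
  | .t1, .s2, .a3 => 0
  | .t1, .s2, .a4 => 0
  | .t2, .s2, .a1 => 0
  | .t2, .s2, .a2 => 1
  | .t2, .s2, .a3 => 0
  | .t2, .s2, .a4 => 0.8
  | .t3, .s2, .a1 => 0
  | .t3, .s2, .a2 => 0
  | .t3, .s2, .a3 => 1.7
  | .t3, .s2, .a4 => 0.8

/-- All types pool on `s'`. -/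
def pi1G : Ty → Sg → ℝ := fun _ s => if s = Sg.s1 then 1 else 0

/-- The receiver plays `a⁴` after every signal. -/
def pi2G : Sg → Ac → ℝ := fun _ a => if a = Ac.a4 then 1 else 0


lemma sum_Sg (f : Sg → ℝ) : ∑ s, f s = f .s1 + f .s2 := by
  rw [show (Finset.univ : Finset Sg) = {Sg.s1, Sg.s2} from rfl]
  rw [Finset.sum_insert (by decide), Finset.sum_singleton]

lemma sum_Ty (f : Ty → ℝ) : ∑ θ, f θ = f .t1 + (f .t2 + f .t3) := by
  rw [show (Finset.univ : Finset Ty) = {Ty.t1, Ty.t2, Ty.t3} from rfl]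
  rw [Finset.sum_insert (by decide), Finset.sum_insert (by decide), Finset.sum_singleton]

lemma sum_Ac (f : Ac → ℝ) : ∑ a, f a = f .a1 + (f .a2 + (f .a3 + f .a4)) := by
  rw [show (Finset.univ : Finset Ac) = {Ac.a1, Ac.a2, Ac.a3, Ac.a4} from rfl]
  rw [Finset.sum_insert (by decide), Finset.sum_insert (by decide),
    Finset.sum_insert (by decide), Finset.sum_singleton]

lemma u1G_s1 (θ : Ty) (a : Ac) : u1G θ Sg.s1 a = 0 := by
  cases θ <;> cases a <;> rfl

lemma u2G_s1 (θ : Ty) (a : Ac) : u2G θ Sg.s1 a = 0 := by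
  cases θ <;> cases a <;> rfl

lemma u1R_s1 (π₂ : Sg → Ac → ℝ) (θ : Ty) : u1R u1G π₂ θ Sg.s1 = 0 := by
  simp [u1R, u1G_s1]

lemma u1R_s2 (π₂ : Sg → Ac → ℝ) (θ : Ty) :
    u1R u1G π₂ θ Sg.s2 =
      π₂ Sg.s2 Ac.a1 * u1G θ Sg.s2 Ac.a1 + (π₂ Sg.s2 Ac.a2 * u1G θ Sg.s2 Ac.a2 +
      (π₂ Sg.s2 Ac.a3 * u1G θ Sg.s2 Ac.a3 + π₂ Sg.s2 Ac.a4 * u1G θ Sg.s2 Ac.a4)) := by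
  rw [u1R, sum_Ac]

/-- point mass -/
def dlt {X : Type*} [DecidableEq X] (c : X) : X → ℝ := fun x => if x = c then 1 else 0

lemma isDist_dlt {X : Type*} [Fintype X] [DecidableEq X] (c : X) : IsDist (dlt c) := by
  constructor
  · intro x; dsimp [dlt]; split <;> norm_num
  · simp [dlt]

lemma expU2_dlt (t : Ty) (s : Sg) (a : Ac) : expU2 u2G (dlt t) s a = u2G t s a := by
  simp [expU2, dlt, ite_mul]

lemma mem_ABR_s1 (a : Ac) : a ∈ ABR u2G Sg.s1 := by
  refine ⟨dlt Ty.t1, isDist_dlt _, fun a' => ?_⟩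
  rw [expU2_dlt, expU2_dlt, u2G_s1, u2G_s1]

lemma a1_mem_ABR : Ac.a1 ∈ ABR u2G Sg.s2 := by
  refine ⟨dlt Ty.t1, isDist_dlt _, fun a' => ?_⟩
  rw [expU2_dlt, expU2_dlt]; cases a' <;> norm_num [u2G]

lemma a2_mem_ABR : Ac.a2 ∈ ABR u2G Sg.s2 := by
  refine ⟨dlt Ty.t2, isDist_dlt _, fun a' => ?_⟩
  rw [expU2_dlt, expU2_dlt]; cases a' <;> norm_num [u2G]

lemma a3_mem_ABR : Ac.a3 ∈ ABR u2G Sg.s2 := by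
  refine ⟨dlt Ty.t3, isDist_dlt _, fun a' => ?_⟩
  rw [expU2_dlt, expU2_dlt]; cases a' <;> norm_num [u2G]

/-- pure receiver strategy playing `c` after every signal -/
def pureR (c : Ac) : Sg → Ac → ℝ := fun _ a => if a = c then 1 else 0

lemma u1R_pureR (c : Ac) (θ : Ty) (s : Sg) : u1R u1G (pureR c) θ s = u1G θ s c := by
  simp [u1R, pureR, ite_mul]

lemma rational2_pureR {c : Ac} (hc : c ∈ ABR u2G Sg.s2) : Rational2 u2G (pureR c) := by
  refine ⟨fun s => isDist_dlt c, fun s a ha => ?_⟩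
  have : a = c := by by_contra h; exact ha (if_neg h)
  subst this
  cases s
  · exact mem_ABR_s1 a
  · exact hc

lemma not_compat_of_pure {c : Ac} (hc : c ∈ ABR u2G Sg.s2) {θa θb : Ty}
    (hb : 0 ≤ u1G θb Sg.s2 c) (haa : u1G θa Sg.s2 c ≤ 0) :
    ¬ MoreCompat u1G u2G Sg.s2 θa θb := by
  intro h
  have hw : WeakBest u1G (pureR c) θb Sg.s2 := by
    intro s' hs'
    cases s'
    · rw [u1R_s1, u1R_pureR]; exact hb
    · exact absurd rfl hs'
  have hs := h (pureR c) (rational2_pureR hc) hw Sg.s1 (by decide)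
  rw [u1R_s1, u1R_pureR] at hs
  linarith

lemma not_compat_12 : ¬ MoreCompat u1G u2G Sg.s2 Ty.t1 Ty.t2 :=
  not_compat_of_pure a2_mem_ABR (by norm_num [u1G]) (by norm_num [u1G])

lemma not_compat_13 : ¬ MoreCompat u1G u2G Sg.s2 Ty.t1 Ty.t3 :=
  not_compat_of_pure a2_mem_ABR (by norm_num [u1G]) (by norm_num [u1G])

lemma not_compat_23 : ¬ MoreCompat u1G u2G Sg.s2 Ty.t2 Ty.t3 :=
  not_compat_of_pure a3_mem_ABR (by norm_num [u1G]) (by norm_num [u1G])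

lemma not_compat_31 : ¬ MoreCompat u1G u2G Sg.s2 Ty.t3 Ty.t1 :=
  not_compat_of_pure a1_mem_ABR (by norm_num [u1G]) (by norm_num [u1G])

lemma not_compat_32 : ¬ MoreCompat u1G u2G Sg.s2 Ty.t3 Ty.t2 :=
  not_compat_of_pure a1_mem_ABR (by norm_num [u1G]) (by norm_num [u1G])

/-- the key compatibility relation -/
lemma compat_21 : MoreCompat u1G u2G Sg.s2 Ty.t2 Ty.t1 := by
  intro π₂ hrat hweak
  obtain ⟨hpos, hsum⟩ := hrat.1 Sg.s2
  rw [sum_Ac] at hsum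
  have h1 := hweak Sg.s1 (by decide)
  rw [u1R_s1, u1R_s2] at h1
  intro s' hs'
  cases s'
  · rw [u1R_s1, u1R_s2]
    have p1 := hpos Ac.a1; have p2 := hpos Ac.a2
    have p3 := hpos Ac.a3; have p4 := hpos Ac.a4
    norm_num [u1G] at h1 ⊢
    nlinarith [p1, p2, p3, p4, hsum, h1]
  · exact absurd rfl hs'

lemma u1R_pi2G (θ : Ty) (s : Sg) : u1R u1G pi2G θ s = u1G θ s Ac.a4 := by
  simp [u1R, pi2G, ite_mul]

lemma eqPayoff_zero (θ : Ty) : eqPayoff u1G pi1G pi2G θ = 0 := by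
  rw [eqPayoff, sum_Sg]
  simp [pi1G, u1R_s1]

lemma nash : NashEq lamG u1G u2G pi1G pi2G := by
  refine ⟨fun θ => ⟨fun s => ?_, ?_⟩, fun s => ⟨fun a => ?_, ?_⟩, ?_, ?_⟩
  · dsimp [pi1G]; split <;> norm_num
  · rw [sum_Sg]; simp [pi1G]
  · dsimp [pi2G]; split <;> norm_num
  · rw [sum_Ac]; simp [pi2G]
  · intro θ s hs s'
    have hs1 : s = Sg.s1 := by
      cases s
      · rfl
      · exact absurd (if_neg (by decide)) hs
    subst hs1
    rw [u1R_pi2G, u1R_pi2G]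
    cases θ <;> cases s' <;> norm_num [u1G]
  · intro s hs a ha a'
    cases s
    · rw [sum_Ty, sum_Ty]; simp [u2G_s1]
    · exfalso; obtain ⟨θ, hθ⟩ := hs
      exact hθ (if_neg (by decide))

lemma mem_Jt_s1 (θ : Ty) : θ ∈ Jt u1G u2G pi1G pi2G Sg.s1 :=
  ⟨Ac.a4, mem_ABR_s1 _, by rw [eqPayoff_zero, u1G_s1]⟩

lemma mem_Jt_s2 (θ : Ty) : θ ∈ Jt u1G u2G pi1G pi2G Sg.s2 := by
  cases θ
  · exact ⟨Ac.a1, a1_mem_ABR, by rw [eqPayoff_zero]; norm_num [u1G]⟩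
  · exact ⟨Ac.a2, a2_mem_ABR, by rw [eqPayoff_zero]; norm_num [u1G]⟩
  · exact ⟨Ac.a2, a2_mem_ABR, by rw [eqPayoff_zero]; norm_num [u1G]⟩

/-- belief putting 0.7 on θ'' and 0.3 on θ''' -/
def pB : Ty → ℝ := fun θ => match θ with
  | .t1 => 0
  | .t2 => 0.7
  | .t3 => 0.3

lemma isDist_pB : IsDist pB := by
  constructor
  · intro x; cases x <;> norm_num [pB]
  · rw [sum_Ty]; norm_num [pB]

lemma a4_BR_pB : Ac.a4 ∈ BRb u2G pB Sg.s2 := by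
  intro a'
  rw [expU2, expU2, sum_Ty, sum_Ty]
  cases a' <;> norm_num [pB, u2G]

lemma rce : RCE lamG u1G u2G pi1G pi2G := by
  refine ⟨nash, ?_⟩
  intro s a ha
  have ha4 : a = Ac.a4 := by by_contra h; exact ha (if_neg h)
  subst ha4
  cases s
  · refine ⟨lamG, ?_, ?_⟩
    · unfold Pt
      rw [if_pos ⟨Ty.t1, mem_Jt_s1 Ty.t1⟩]
      refine ⟨⟨⟨fun θ => by norm_num [lamG], by rw [sum_Ty]; norm_num [lamG]⟩,
        fun θ hθ => absurd (mem_Jt_s1 θ) hθ⟩, ?_⟩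
      intro θ' θ'' _
      unfold OddsLe lamG
      norm_num
    · intro a'
      rw [expU2, expU2, sum_Ty, sum_Ty]
      simp [u2G_s1]
  · refine ⟨pB, ?_, a4_BR_pB⟩
    unfold Pt
    rw [if_pos ⟨Ty.t1, mem_Jt_s2 Ty.t1⟩]
    refine ⟨⟨isDist_pB, fun θ hθ => absurd (mem_Jt_s2 θ) hθ⟩, ?_⟩
    intro θ' θ'' hc
    unfold OddsLe lamG
    cases θ' <;> cases θ''
    · norm_num [pB]
    · exact absurd hc not_compat_12
    · exact absurd hc not_compat_13
    · norm_num [pB]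
    · norm_num [pB]
    · norm_num [pB]
    · norm_num [pB]
    · exact absurd hc not_compat_32
    · norm_num [pB]

/-- in the three-type game, the pooling profile (with the receiver playing
`a⁴` everywhere) is an RCE, and the only pair of distinct types related by rational
compatibility at `s''` is `θ'' ≿_{s''} θ'`. -/
theorem three_type_pooling_is_RCE_and_unique_compat_pair :
    RCE lamG u1G u2G pi1G pi2G ∧
    MoreCompat u1G u2G Sg.s2 Ty.t2 Ty.t1 ∧
    (∀ θa θb : Ty, θa ≠ θb → MoreCompat u1G u2G Sg.s2 θa θb →
      θa = Ty.t2 ∧ θb = Ty.t1) := by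
  refine ⟨rce, compat_21, ?_⟩
  intro θa θb hne hc
  cases θa <;> cases θb
  · exact absurd rfl hne
  · exact absurd hc not_compat_12
  · exact absurd hc not_compat_13
  · exact ⟨rfl, rfl⟩
  · exact absurd rfl hne
  · exact absurd hc not_compat_23
  · exact absurd hc not_compat_31
  · exact absurd hc not_compat_32
  · exact absurd rfl hne

end
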